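/- arXiv:1811.00675 — 4 statements merged into one kernel-verified Lean document; each statement's English description precedes it below -/
import Mathlib

section
/- Let N ≥ 2 be an integer and for s ∈ [0, 1] let A(s) be the real 2×2 matrix A(s) = [[(1−s)(N−1)/N, (s−1)(N−1)/N^{3/2}], [(s−1)/√N, (1−s+sN)/N]]. Then for every s ∈ [0, 1] the quantity 1 − 4((N−1)/N)s(1−s) is strictly positive, and the eigenvalues of A(s) are exactly λ₋(s) = (1 − √(1 − 4((N−1)/N)s(1−s)))/2 and λ₊(s) = (1 + √(1 − 4((N−1)/N)s(1−s)))/2; in particular the spectral gap is g(s) = λ₊(s) − λ₋(s) = √(1 − 4((N−1)/N)s(1−s)). -/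
/-- for `s ∈ [0,1]`, `1 - 4((N-1)/N)s(1-s) > 0` and the eigenvalues of the
restricted Grover Hamiltonian matrix `A(s)` are exactly
`λ∓(s) = (1 ∓ √(1 - 4((N-1)/N)s(1-s)))/2`; the spectral gap is
`λ₊(s) - λ₋(s) = √(1 - 4((N-1)/N)s(1-s))`. -/
theorem stmt_5 (N : ℕ) (hN : 2 ≤ N)
    (A : ℝ → Matrix (Fin 2) (Fin 2) ℝ)
    (hA : ∀ s : ℝ, A s =
      !![(1 - s) * (N - 1) / N, (s - 1) * (N - 1) / (N * Real.sqrt N);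
         (s - 1) / Real.sqrt N, (1 - s + s * N) / N]) :
    ∀ s ∈ Set.Icc (0 : ℝ) 1,
      0 < 1 - 4 * (((N : ℝ) - 1) / N) * s * (1 - s) ∧
      spectrum ℝ (A s) =
        {(1 - Real.sqrt (1 - 4 * (((N : ℝ) - 1) / N) * s * (1 - s))) / 2,
         (1 + Real.sqrt (1 - 4 * (((N : ℝ) - 1) / N) * s * (1 - s))) / 2} ∧
      (1 + Real.sqrt (1 - 4 * (((N : ℝ) - 1) / N) * s * (1 - s))) / 2 -
        (1 - Real.sqrt (1 - 4 * (((N : ℝ) - 1) / N) * s * (1 - s))) / 2 =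
        Real.sqrt (1 - 4 * (((N : ℝ) - 1) / N) * s * (1 - s)) := by
  intro s hs
  obtain ⟨hs0, hs1⟩ := hs
  have hN1 : (2:ℝ) ≤ N := by exact_mod_cast hN
  have hNpos : (0:ℝ) < N := by linarith
  have hc0 : (0:ℝ) ≤ ((N:ℝ)-1)/N := div_nonneg (by linarith) hNpos.le
  have hc1 : ((N:ℝ)-1)/N < 1 := (div_lt_one hNpos).mpr (by linarith)
  have hD : 0 < 1 - 4 * (((N : ℝ) - 1) / N) * s * (1 - s) := by
    nlinarith [mul_nonneg hc0 (sq_nonneg (2*s-1))]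
  set r := Real.sqrt (1 - 4 * (((N : ℝ) - 1) / N) * s * (1 - s)) with hrdef
  have hr2 : r^2 = 1 - 4 * (((N : ℝ) - 1) / N) * s * (1 - s) := Real.sq_sqrt hD.le
  have hsq : Real.sqrt N * Real.sqrt N = N := Real.mul_self_sqrt hNpos.le
  have hsqpos : (0:ℝ) < Real.sqrt N := Real.sqrt_pos.mpr hNpos
  refine ⟨hD, ?_, by ring⟩
  ext μ
  have hdet : ((algebraMap ℝ (Matrix (Fin 2) (Fin 2) ℝ)) μ - A s).det
      = (μ - (1 - r)/2) * (μ - (1 + r)/2) := by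
    rw [hA]
    simp [Matrix.det_fin_two, Matrix.algebraMap_matrix_apply]
    field_simp
    simp only [Real.sq_sqrt hNpos.le]
    have hr2' : (N:ℝ) * r^2 = N - 4*((N:ℝ)-1)*s*(1-s) := by
      rw [hr2]; field_simp
    linear_combination ((N:ℝ)^2) * hr2'
  constructor
  · intro hμ
    rw [spectrum.mem_iff] at hμ
    have : ((algebraMap ℝ (Matrix (Fin 2) (Fin 2) ℝ)) μ - A s).det = 0 := by
      by_contra h
      exact hμ ((Matrix.isUnit_iff_isUnit_det _).mpr (isUnit_iff_ne_zero.mpr h))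
    rw [hdet] at this
    rcases mul_eq_zero.mp this with h | h
    · left; linarith
    · right; show μ = _; linarith
  · intro hμ
    rw [spectrum.mem_iff]
    intro hU
    have hz : (μ - (1 - r)/2) * (μ - (1 + r)/2) ≠ 0 := by
      rw [← hdet]; exact ((Matrix.isUnit_iff_isUnit_det _).mp hU).ne_zero
    simp only [Set.mem_insert_iff, Set.mem_singleton_iff] at hμ
    rcases hμ with h | h
    · exact hz (by rw [h]; ring)
    · exact hz (by rw [h]; ring)
end

section
/- Let N ≥ 2 be an integer. Then ∫₀¹ ds / (1 − 4((N−1)/N)·s(1−s)) = (N/√(N−1)) · arctan(√(N−1)). (Here the integrand 1/g(s)², with g(s) the spectral gap, is everywhere defined since 1 − 4((N−1)/N)s(1−s) ≥ 1/N > 0 on [0,1].) -/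
/-- `∫₀¹ ds / (1 - 4((N-1)/N)s(1-s)) = (N/√(N-1)) · arctan √(N-1)`. -/
theorem stmt_7 (N : ℕ) (hN : 2 ≤ N) :
    ∫ s in (0 : ℝ)..1, 1 / (1 - 4 * (((N : ℝ) - 1) / N) * s * (1 - s)) =
      ((N : ℝ) / Real.sqrt ((N : ℝ) - 1)) * Real.arctan (Real.sqrt ((N : ℝ) - 1)) := by
  have hN1 : (1 : ℝ) ≤ (N : ℝ) - 1 := by
    have : (2 : ℝ) ≤ (N : ℝ) := by exact_mod_cast hN
    linarith
  set k := Real.sqrt ((N : ℝ) - 1) with hkdef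
  have hk2 : k ^ 2 = (N : ℝ) - 1 := by
    rw [hkdef, sq, Real.mul_self_sqrt (by linarith)]
  have hkpos : 0 < k := Real.sqrt_pos.mpr (by linarith)
  have hNpos : (0 : ℝ) < (N : ℝ) := by nlinarith
  have hNne : (N : ℝ) ≠ 0 := ne_of_gt hNpos
  -- denominator rewrite
  have hden : ∀ s : ℝ, 1 - 4 * (((N : ℝ) - 1) / N) * s * (1 - s)
      = (1 + (k * (2 * s - 1)) ^ 2) / N := by
    intro s
    field_simp
    nlinarith [hk2]
  have hderiv : ∀ s : ℝ,
      HasDerivAt (fun t : ℝ => ((N : ℝ) / (2 * k)) * Real.arctan (k * (2 * t - 1)))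
        (1 / (1 - 4 * (((N : ℝ) - 1) / N) * s * (1 - s))) s := by
    intro s
    have h1 : HasDerivAt (fun t : ℝ => k * (2 * t - 1)) (k * 2) s := by
      have := (((hasDerivAt_id s).const_mul (2 : ℝ)).sub_const 1).const_mul k
      simpa using this
    have h2 := (Real.hasDerivAt_arctan (k * (2 * s - 1))).comp s h1
    have h3 := h2.const_mul ((N : ℝ) / (2 * k))
    convert h3 using 1
    case e'_4 => rfl
    case e'_5 => rfl
    case e'_8 => rfl
    rw [hden s]
    have hpos : 0 < 1 + (k * (2 * s - 1)) ^ 2 := by positivity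
    field_simp
  have hcont : Continuous fun s : ℝ => 1 / (1 - 4 * (((N : ℝ) - 1) / N) * s * (1 - s)) := by
    apply Continuous.div continuous_const
    · fun_prop
    · intro s
      rw [hden s]
      positivity
  rw [intervalIntegral.integral_eq_sub_of_hasDerivAt (fun s _ => hderiv s)
    (hcont.intervalIntegrable 0 1)]
  have : k * (2 * (0:ℝ) - 1) = -k := by ring
  rw [this]
  have : k * (2 * (1:ℝ) - 1) = k := by ring
  rw [this, Real.arctan_neg]
  field_simp
  ring
end

section
/- Let a > 0 be a real number and define f : ℝ² → ℝ by f(s, λ) = a(s − s²) + λ² − λ. Then the total Gaussian curvature of the graph of f is exactly −2π: ∫_{ℝ²} (f_{ss}f_{λλ} − f_{sλ}²) / (1 + f_s² + f_λ²)^{3/2} ds dλ = −2π. (The integrand is K·√(1 + f_s² + f_λ²), i.e. the Gaussian curvature K = (f_{ss}f_{λλ} − f_{sλ}²)/(1 + f_s² + f_λ²)² times the area element of the graph.) -/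
open MeasureTheory Filter Topology

-- core 1D integrability
lemma aux_integrable (b : ℝ) (hb : 0 < b) :
    Integrable (fun t : ℝ => (b^2 + t^2) ^ (-(3:ℝ)/2)) := by
  have hD : ∀ t : ℝ, 0 < b^2 + t^2 := fun t => by positivity
  set m := min b 1 with hm
  have hm0 : 0 < m := lt_min hb one_pos
  have hcont : Continuous (fun t : ℝ => (b^2 + t^2) ^ (-(3:ℝ)/2)) := by
    apply Continuous.rpow_const (by continuity)
    exact fun t => Or.inl (hD t).ne'
  refine (integrable_inv_one_add_sq.const_mul ((m^3)⁻¹)).mono' hcont.aestronglyMeasurable ?_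
  filter_upwards with t
  have hD' := hD t
  have h1 : m^3 * (1 + t^2) ≤ (b^2 + t^2) ^ ((3:ℝ)/2) := by
    have e1 : (m^2 * (1 + t^2)) ^ ((3:ℝ)/2) ≤ (b^2 + t^2) ^ ((3:ℝ)/2) := by
      apply Real.rpow_le_rpow (by positivity) ?_ (by norm_num)
      have h2 : m ≤ b := min_le_left _ _
      have h3 : m ≤ 1 := min_le_right _ _
      have h4 : m^2 ≤ b^2 := by nlinarith
      have hm2 : m^2 ≤ 1 := by nlinarith
      have h5 : m^2 * t^2 ≤ t^2 := by nlinarith [mul_nonneg (sub_nonneg.2 hm2) (sq_nonneg t)]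
      nlinarith
    have e2 : (m^2 * (1 + t^2)) ^ ((3:ℝ)/2) = m^3 * (1 + t^2) ^ ((3:ℝ)/2) := by
      rw [Real.mul_rpow (by positivity) (by positivity)]
      congr 1
      rw [← Real.rpow_natCast m 2, ← Real.rpow_natCast m 3, ← Real.rpow_mul hm0.le]
      norm_num
    have e3 : (1 + t^2) ^ (1:ℝ) ≤ (1 + t^2) ^ ((3:ℝ)/2) :=
      Real.rpow_le_rpow_of_exponent_le (by nlinarith [sq_nonneg t]) (by norm_num)
    rw [Real.rpow_one] at e3
    nlinarith [pow_pos hm0 3]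
  calc ‖(b^2 + t^2) ^ (-(3:ℝ)/2)‖ = ((b^2 + t^2) ^ ((3:ℝ)/2))⁻¹ := by
        rw [Real.norm_eq_abs, abs_of_nonneg (Real.rpow_nonneg hD'.le _),
          show (-(3:ℝ)/2) = -((3:ℝ)/2) by norm_num, Real.rpow_neg hD'.le]
    _ ≤ (m^3 * (1 + t^2))⁻¹ := inv_anti₀ (by positivity) h1
    _ = (m^3)⁻¹ * (1 + t^2)⁻¹ := mul_inv _ _

lemma aux_tendsto_top (b : ℝ) (hb : 0 < b) :
    Tendsto (fun t : ℝ => t / Real.sqrt (b^2 + t^2)) atTop (𝓝 1) := by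
  have hp : Tendsto (fun t : ℝ => t^2) atTop atTop :=
    tendsto_pow_atTop (two_ne_zero : (2:ℕ) ≠ 0)
  have hq : Tendsto (fun t : ℝ => b^2 / t^2) atTop (𝓝 0) :=
    Tendsto.div_atTop (tendsto_const_nhds : Tendsto (fun _ : ℝ => b^2) atTop (𝓝 (b^2))) hp
  have h0 : Tendsto (fun t : ℝ => b^2 / t^2 + 1) atTop (𝓝 1) := by
    simpa using hq.add (tendsto_const_nhds : Tendsto (fun _ : ℝ => (1:ℝ)) atTop (𝓝 1))
  have h1 : Tendsto (fun t : ℝ => (Real.sqrt (b^2 / t^2 + 1))⁻¹) atTop (𝓝 1) := by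
    have := ((Real.continuous_sqrt.tendsto 1).comp h0).inv₀ (by simp)
    simpa using this
  apply h1.congr'
  filter_upwards [eventually_gt_atTop (0:ℝ)] with t ht
  have hs : Real.sqrt (b^2 + t^2) = t * Real.sqrt (b^2 / t^2 + 1) := by
    have e : b^2 + t^2 = t^2 * (b^2 / t^2 + 1) := by field_simp
    rw [e, Real.sqrt_mul (sq_nonneg t), Real.sqrt_sq ht.le]
  rw [hs]
  rw [div_mul_eq_div_div, div_self ht.ne', one_div]

lemma aux_tendsto_bot (b : ℝ) (hb : 0 < b) :
    Tendsto (fun t : ℝ => t / Real.sqrt (b^2 + t^2)) atBot (𝓝 (-1)) := by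
  have h := ((aux_tendsto_top b hb).comp tendsto_neg_atBot_atTop).neg
  refine h.congr fun x => ?_
  simp [Function.comp_def, neg_div, neg_sq]

lemma aux_hasDeriv (b : ℝ) (hb : 0 < b) (t : ℝ) :
    HasDerivAt (fun t : ℝ => t / (Real.sqrt (b^2 + t^2) * b^2))
      ((b^2 + t^2) ^ (-(3:ℝ)/2)) t := by
  have hD : 0 < b^2 + t^2 := by positivity
  have hs : 0 < Real.sqrt (b^2 + t^2) := Real.sqrt_pos.2 hD
  have hsq : Real.sqrt (b^2 + t^2) ^ 2 = b^2 + t^2 := Real.sq_sqrt hD.le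
  have hinner : HasDerivAt (fun t : ℝ => b^2 + t^2) (2*t) t := by
    simpa using (hasDerivAt_pow 2 t).const_add (b^2)
  have hsqrt := (hinner.sqrt hD.ne')
  have hden := hsqrt.mul_const (b^2)
  have hG := (hasDerivAt_id t).div hden (by positivity)
  convert hG using 1
  · rfl
  · rfl
  · rfl
  have hrpow : (b^2 + t^2) ^ (-(3:ℝ)/2) = (Real.sqrt (b^2 + t^2) * (b^2 + t^2))⁻¹ := by
    rw [show (-(3:ℝ)/2) = -((3:ℝ)/2) by norm_num, Real.rpow_neg hD.le]
    congr 1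
    rw [show ((3:ℝ)/2) = 1/2 + 1 by norm_num, Real.rpow_add hD, Real.rpow_one,
      ← Real.sqrt_eq_rpow]
  rw [hrpow, id]
  field_simp
  linear_combination (-t^2) * hsq

lemma aux_integral (b : ℝ) (hb : 0 < b) :
    ∫ t : ℝ, (b^2 + t^2) ^ (-(3:ℝ)/2) = 2 / b^2 := by
  have htop : Tendsto (fun t : ℝ => t / (Real.sqrt (b^2 + t^2) * b^2)) atTop (𝓝 (1/b^2)) := by
    have := (aux_tendsto_top b hb).div_const (b^2)
    refine this.congr fun t => ?_
    rw [div_div]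
  have hbot : Tendsto (fun t : ℝ => t / (Real.sqrt (b^2 + t^2) * b^2)) atBot (𝓝 (-1/b^2)) := by
    have := (aux_tendsto_bot b hb).div_const (b^2)
    refine this.congr fun t => ?_
    rw [div_div]
  rw [integral_of_hasDerivAt_of_tendsto (aux_hasDeriv b hb) (aux_integrable b hb) hbot htop]
  ring

lemma aux_integrable2 (c : ℝ) (hc : 0 < c) :
    Integrable (fun lam : ℝ => (c + (2*lam - 1)^2) ^ (-(3:ℝ)/2)) := by
  have hb : 0 < Real.sqrt c := Real.sqrt_pos.2 hc
  have h := ((aux_integrable _ hb).comp_sub_right 1).comp_mul_left' (two_ne_zero (α := ℝ))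
  refine h.congr ?_
  filter_upwards with t
  rw [Real.sq_sqrt hc.le]

lemma aux_integral2 (c : ℝ) (hc : 0 < c) :
    ∫ lam : ℝ, (c + (2*lam - 1)^2) ^ (-(3:ℝ)/2) = 1/c := by
  have hb : 0 < Real.sqrt c := Real.sqrt_pos.2 hc
  have e1 : (∫ lam : ℝ, (c + (2*lam - 1)^2) ^ (-(3:ℝ)/2))
      = ∫ lam : ℝ, (fun x : ℝ => (c + (x - 1)^2) ^ (-(3:ℝ)/2)) (2 * lam) := by rfl
  rw [e1, MeasureTheory.Measure.integral_comp_mul_left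
    (fun x : ℝ => (c + (x - 1)^2) ^ (-(3:ℝ)/2)) 2]
  have e2 : (∫ x : ℝ, (c + (x - 1)^2) ^ (-(3:ℝ)/2)) = ∫ x : ℝ, (c + x^2) ^ (-(3:ℝ)/2) := by
    exact integral_sub_right_eq_self (fun x : ℝ => (c + x^2) ^ (-(3:ℝ)/2)) 1
  rw [e2]
  have e3 : (∫ x : ℝ, (c + x^2) ^ (-(3:ℝ)/2)) = 2 / c := by
    have := aux_integral (Real.sqrt c) hb
    rw [Real.sq_sqrt hc.le] at this
    exact this
  rw [e3]
  rw [smul_eq_mul, abs_of_nonneg (by norm_num : (0:ℝ) ≤ 2⁻¹)]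
  field_simp

lemma aux_outer_int (a : ℝ) (ha : 0 < a) :
    Integrable (fun s : ℝ => (1 + (a - 2*a*s)^2)⁻¹) := by
  have h := ((integrable_inv_one_add_sq.comp_sub_right (-a)).comp_mul_left'
    (neg_ne_zero.2 (by positivity) : -(2*a) ≠ 0))
  refine h.congr ?_
  filter_upwards with s
  congr 2
  ring

lemma aux_outer (a : ℝ) (ha : 0 < a) :
    ∫ s : ℝ, (1 + (a - 2*a*s)^2)⁻¹ = Real.pi / (2*a) := by
  have e1 : (∫ s : ℝ, (1 + (a - 2*a*s)^2)⁻¹)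
      = ∫ s : ℝ, (fun x : ℝ => (1 + (x + a)^2)⁻¹) ((-(2*a)) * s) := by
    congr 1; funext s; congr 2; ring
  rw [e1, MeasureTheory.Measure.integral_comp_mul_left (fun x : ℝ => (1 + (x + a)^2)⁻¹) (-(2*a))]
  have e2 : (∫ x : ℝ, (1 + (x + a)^2)⁻¹) = Real.pi := by
    rw [integral_add_right_eq_self (fun x : ℝ => (1 + x^2)⁻¹) a]
    exact integral_univ_inv_one_add_sq
  rw [e2, smul_eq_mul]
  rw [abs_inv, abs_neg, abs_of_pos (by positivity : (0:ℝ) < 2*a)]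
  ring

lemma aux_prod_int (a : ℝ) (ha : 0 < a) :
    Integrable (fun p : ℝ × ℝ => (1 + (a - 2*a*p.1)^2 + (2*p.2 - 1)^2) ^ (-(3:ℝ)/2)) := by
  have hD : ∀ p : ℝ × ℝ, 0 < 1 + (a - 2*a*p.1)^2 + (2*p.2 - 1)^2 := fun p => by positivity
  have hmeas : AEStronglyMeasurable
      (fun p : ℝ × ℝ => (1 + (a - 2*a*p.1)^2 + (2*p.2 - 1)^2) ^ (-(3:ℝ)/2)) := by
    apply Continuous.aestronglyMeasurable
    apply Continuous.rpow_const (by continuity)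
    exact fun p => Or.inl (hD p).ne'
  rw [Measure.volume_eq_prod] at hmeas ⊢
  rw [integrable_prod_iff hmeas]
  constructor
  · filter_upwards with x
    exact aux_integrable2 (1 + (a - 2*a*x)^2) (by positivity)
  · have e : (fun x : ℝ => ∫ y : ℝ, ‖(1 + (a - 2*a*x)^2 + (2*y - 1)^2) ^ (-(3:ℝ)/2)‖)
        = fun x : ℝ => (1 + (a - 2*a*x)^2)⁻¹ := by
      funext x
      have : ∀ y : ℝ, ‖(1 + (a - 2*a*x)^2 + (2*y - 1)^2) ^ (-(3:ℝ)/2)‖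
          = (1 + (a - 2*a*x)^2 + (2*y - 1)^2) ^ (-(3:ℝ)/2) := fun y => by
        rw [Real.norm_eq_abs, abs_of_nonneg (Real.rpow_nonneg (by positivity) _)]
      simp_rw [this]
      rw [aux_integral2 (1 + (a - 2*a*x)^2) (by positivity), one_div]
    rw [e]
    exact aux_outer_int a ha

lemma aux_prod (a : ℝ) (ha : 0 < a) :
    ∫ p : ℝ × ℝ, (1 + (a - 2*a*p.1)^2 + (2*p.2 - 1)^2) ^ (-(3:ℝ)/2) = Real.pi / (2*a) := by
  have h := aux_prod_int a ha
  rw [Measure.volume_eq_prod] at h ⊢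
  rw [integral_prod _ h]
  have e : (fun x : ℝ => ∫ y : ℝ, (1 + (a - 2*a*x)^2 + (2*y - 1)^2) ^ (-(3:ℝ)/2))
      = fun x : ℝ => (1 + (a - 2*a*x)^2)⁻¹ := by
    funext x
    rw [aux_integral2 (1 + (a - 2*a*x)^2) (by positivity), one_div]
  rw [show (∫ x : ℝ, ∫ y : ℝ, (1 + (a - 2*a*x)^2 + (2*y - 1)^2) ^ (-(3:ℝ)/2))
      = ∫ x : ℝ, (1 + (a - 2*a*x)^2)⁻¹ from by rw [e]]
  exact aux_outer a ha

lemma aux_ds (a lam : ℝ) :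
    deriv (fun t : ℝ => a * (t - t ^ 2) + lam ^ 2 - lam) = fun t => a - 2*a*t := by
  funext t
  have h : HasDerivAt (fun t : ℝ => a * (t - t ^ 2) + lam ^ 2 - lam)
      (a * (1 - ↑2 * t ^ 1)) t :=
    ((((hasDerivAt_id t).sub (hasDerivAt_pow 2 t)).const_mul a).add_const (lam^2)).sub_const lam
  rw [h.deriv]; push_cast; ring

lemma aux_dss (a x : ℝ) : deriv (fun t : ℝ => a - 2*a*t) x = -(2*a) := by
  have h : HasDerivAt (fun t : ℝ => a - 2*a*t) (-(2*a*1)) x :=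
    ((hasDerivAt_id x).const_mul (2*a)).const_sub a
  rw [h.deriv]; ring

lemma aux_dl (C lam : ℝ) :
    deriv (fun t : ℝ => C + t ^ 2 - t) = fun t => 2*t - 1 := by
  funext t
  have h : HasDerivAt (fun t : ℝ => C + t ^ 2 - t) (↑2 * t ^ 1 - 1) t :=
    ((hasDerivAt_pow 2 t).const_add C).sub (hasDerivAt_id t)
  rw [h.deriv]; push_cast; ring

lemma aux_dll (x : ℝ) : deriv (fun t : ℝ => 2*t - 1) x = 2 := by
  have h : HasDerivAt (fun t : ℝ => 2*t - 1) (2*1) x :=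
    (((hasDerivAt_id x).const_mul 2)).sub_const 1
  rw [h.deriv]; ring


/-- for `f(s, λ) = a(s - s²) + λ² - λ` with `a > 0`, the total Gaussian
curvature of the graph of `f`, i.e. `∫_{ℝ²} (f_ss f_λλ - f_sλ²)/(1 + f_s² + f_λ²)^{3/2}`,
equals `-2π`. -/
theorem stmt_9 (a : ℝ) (ha : 0 < a)
    (f : ℝ → ℝ → ℝ)
    (hf : ∀ s lam : ℝ, f s lam = a * (s - s ^ 2) + lam ^ 2 - lam) :
    ∫ p : ℝ × ℝ,
      (deriv (fun t => deriv (fun t' => f t' p.2) t) p.1 *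
         deriv (fun t => deriv (fun t' => f p.1 t') t) p.2 -
       (deriv (fun t => deriv (fun t' => f t t') p.2) p.1) ^ 2) /
      (1 + (deriv (fun t => f t p.2) p.1) ^ 2 + (deriv (fun t => f p.1 t) p.2) ^ 2)
        ^ ((3 : ℝ) / 2) = -2 * Real.pi := by
  have hf' : f = fun s lam => a * (s - s ^ 2) + lam ^ 2 - lam :=
    funext fun s => funext fun lam => hf s lam
  subst hf'
  have key : (fun p : ℝ × ℝ =>
      (deriv (fun t => deriv (fun t' => a * (t' - t' ^ 2) + p.2 ^ 2 - p.2) t) p.1 *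
         deriv (fun t => deriv (fun t' => a * (p.1 - p.1 ^ 2) + t' ^ 2 - t') t) p.2 -
       (deriv (fun t => deriv (fun t' => a * (t - t ^ 2) + t' ^ 2 - t') p.2) p.1) ^ 2) /
      (1 + (deriv (fun t => a * (t - t ^ 2) + p.2 ^ 2 - p.2) p.1) ^ 2 +
        (deriv (fun t => a * (p.1 - p.1 ^ 2) + t ^ 2 - t) p.2) ^ 2) ^ ((3 : ℝ) / 2))
      = fun p : ℝ × ℝ =>
        (-(4*a)) * ((1 + (a - 2*a*p.1)^2 + (2*p.2 - 1)^2) ^ (-(3:ℝ)/2)) := by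
    funext p
    have e1 : (fun t : ℝ => deriv (fun t' => a * (t' - t' ^ 2) + p.2 ^ 2 - p.2) t)
        = fun t => a - 2*a*t := by
      funext t; rw [aux_ds a p.2]
    have e2 : (fun t : ℝ => deriv (fun t' => a * (p.1 - p.1 ^ 2) + t' ^ 2 - t') t)
        = fun t => 2*t - 1 := by
      funext t; rw [aux_dl (a * (p.1 - p.1 ^ 2)) p.2]
    have e3 : (fun t : ℝ => deriv (fun t' => a * (t - t ^ 2) + t' ^ 2 - t') p.2)
        = fun t : ℝ => 2*p.2 - 1 := by
      funext t; rw [aux_dl (a * (t - t ^ 2)) p.2]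
    rw [e1, e2, e3, aux_dss a p.1, aux_dll p.2, deriv_const, aux_ds a p.2, aux_dl (a * (p.1 - p.1^2)) p.2]
    have hD : (0:ℝ) < 1 + (a - 2*a*p.1)^2 + (2*p.2 - 1)^2 := by positivity
    rw [show (-(3:ℝ)/2) = -((3:ℝ)/2) by norm_num, Real.rpow_neg hD.le]
    rw [div_eq_mul_inv]
    ring
  rw [key, integral_const_mul, aux_prod a ha]
  field_simp
  ring
end

section
/- Let N ≥ 2 be an integer and for s ∈ [0, 1] let A(s) be the real 2×2 matrix A(s) = [[(1−s)(N−1)/N, (s−1)(N−1)/N^{3/2}], [(s−1)/√N, (1−s+sN)/N]]. Then for every s ∈ [0, 1] the two eigenvalues of A(s) are distinct; i.e. no eigenvalue crossing occurs along the entire adiabatic evolution of the restricted quantum search Hamiltonian. -/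
/-- no eigenvalue crossing occurs for the restricted Grover Hamiltonian:
for every `s ∈ [0,1]`, the matrix `A(s)` has two distinct eigenvalues. -/
theorem stmt_18 (N : ℕ) (hN : 2 ≤ N)
    (A : ℝ → Matrix (Fin 2) (Fin 2) ℝ)
    (hA : ∀ s : ℝ, A s =
      !![(1 - s) * (N - 1) / N, (s - 1) * (N - 1) / (N * Real.sqrt N);
         (s - 1) / Real.sqrt N, (1 - s + s * N) / N]) :
    ∀ s ∈ Set.Icc (0 : ℝ) 1,
      ∃ a b : ℝ, a ≠ b ∧ spectrum ℝ (A s) = {a, b} := by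
  intro s _
  have hN2 : (2:ℝ) ≤ (N:ℝ) := by exact_mod_cast hN
  have hN0 : (0:ℝ) < (N:ℝ) := by linarith
  have hsq : (0:ℝ) < Real.sqrt N := Real.sqrt_pos.mpr hN0
  have hsqsq : Real.sqrt N * Real.sqrt N = (N:ℝ) := Real.mul_self_sqrt hN0.le
  set p : ℝ := (1 - s) * ((N:ℝ) - 1) / N with hp
  set q : ℝ := (s - 1) * ((N:ℝ) - 1) / (N * Real.sqrt N) with hq
  set r : ℝ := (s - 1) / Real.sqrt N with hr
  set t : ℝ := (1 - s + s * (N:ℝ)) / N with ht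
  have hqr : q * r = (s - 1)^2 * ((N:ℝ) - 1) / ((N:ℝ)^2) := by
    have hden : ((N:ℝ) * Real.sqrt N) * Real.sqrt N = (N:ℝ)^2 := by
      rw [mul_assoc, hsqsq]; ring
    rw [hq, hr, div_mul_div_comm, hden]; ring
  have hD : 0 < (p - t)^2 + 4*(q*r) := by
    rcases eq_or_ne s 1 with h1 | h1
    · subst h1
      have hp0 : p = 0 := by rw [hp]; ring
      have ht1 : t = 1 := by rw [ht]; field_simp; ring
      rw [hqr, hp0, ht1]; norm_num
    · have hs1 : (0:ℝ) < (s-1)^2 := pow_two_pos_of_ne_zero (sub_ne_zero.mpr h1)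
      have hnum : 0 < (s-1)^2 * ((N:ℝ)-1) / (N:ℝ)^2 := by
        have h1 : (0:ℝ) < (N:ℝ) - 1 := by linarith
        exact div_pos (mul_pos hs1 h1) (by positivity)
      nlinarith [sq_nonneg (p - t)]
  set d : ℝ := Real.sqrt ((p - t)^2 + 4*(q*r)) with hdd
  have hdpos : 0 < d := Real.sqrt_pos.mpr hD
  have hd : d^2 = (p - t)^2 + 4*(q*r) := Real.sq_sqrt hD.le
  refine ⟨((p+t)+d)/2, ((p+t)-d)/2, by intro h; nlinarith, ?_⟩
  ext x
  have hmat : (algebraMap ℝ (Matrix (Fin 2) (Fin 2) ℝ)) x - A s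
      = !![x - p, -q; -r, x - t] := by
    rw [hA s]
    ext i j
    fin_cases i <;> fin_cases j <;>
      simp [Matrix.algebraMap_matrix_apply] <;> rfl
  have hdet : ((algebraMap ℝ (Matrix (Fin 2) (Fin 2) ℝ)) x - A s).det
      = (x - ((p+t)+d)/2) * (x - ((p+t)-d)/2) := by
    rw [hmat, Matrix.det_fin_two_of]
    linear_combination ((1:ℝ)/4) * hd
  simp only [Set.mem_insert_iff, Set.mem_singleton_iff, spectrum.mem_iff,
    Matrix.isUnit_iff_isUnit_det, isUnit_iff_ne_zero, not_not, hdet,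
    mul_eq_zero, sub_eq_zero]
end
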